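/- Let p and q be probability measures on a measurable space such that q is absolutely continuous with respect to p, with Radon–Nikodym derivative f = dq/dp. If there exists a measurable set A with q(A) ≥ 2/3 and p(A) ≤ 1/3, then ∫ f² dp ≥ 4/3. -/

import Mathlib

open MeasureTheory

lemma ennreal_amgm (a : ENNReal) : 4 * a ≤ a ^ 2 + 4 := by
  rcases eq_or_ne a ⊤ with h | h
  · simp [h]
  lift a to NNReal using h
  have : (4 : ENNReal) = ((4 : NNReal) : ENNReal) := by norm_num
  rw [this, ← ENNReal.coe_mul, ← ENNReal.coe_pow, ← ENNReal.coe_add, ENNReal.coe_le_coe,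
    ← NNReal.coe_le_coe]
  push_cast
  nlinarith [sq_nonneg ((a : ℝ) - 2)]

theorem chi_square_lower_bound_of_distinguishable
    {Ω : Type*} [MeasurableSpace Ω] (p q : Measure Ω)
    [IsProbabilityMeasure p] [IsProbabilityMeasure q]
    (hac : q ≪ p)
    (A : Set Ω) (hA : MeasurableSet A)
    (hqA : 2 / 3 ≤ q A) (hpA : p A ≤ 1 / 3) :
    4 / 3 ≤ ∫⁻ x, (q.rnDeriv p x) ^ 2 ∂p := by
  set f := q.rnDeriv p with hf
  have hfm : Measurable f := Measure.measurable_rnDeriv q p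
  have h1 : ∫⁻ x in A, f x ∂p = q A := Measure.setLIntegral_rnDeriv hac A
  have key : 4 * q A ≤ (∫⁻ x, f x ^ 2 ∂p) + 4 * p A := by
    calc 4 * q A = ∫⁻ x in A, 4 * f x ∂p := by
          rw [lintegral_const_mul _ hfm, h1]
      _ ≤ ∫⁻ x in A, (f x ^ 2 + 4) ∂p := lintegral_mono fun x => ennreal_amgm (f x)
      _ = (∫⁻ x in A, f x ^ 2 ∂p) + 4 * p A := by
          rw [lintegral_add_right _ measurable_const, lintegral_const,
            Measure.restrict_apply_univ, mul_comm]
      _ ≤ (∫⁻ x, f x ^ 2 ∂p) + 4 * p A := by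
          gcongr
          exact Measure.restrict_le_self
  have h2 : (8 : ENNReal) / 3 ≤ (∫⁻ x, f x ^ 2 ∂p) + 4 / 3 := by
    calc (8 : ENNReal) / 3 = 4 * (2 / 3) := by
          rw [← mul_div_assoc]; norm_num
      _ ≤ 4 * q A := by gcongr
      _ ≤ (∫⁻ x, f x ^ 2 ∂p) + 4 * p A := key
      _ ≤ (∫⁻ x, f x ^ 2 ∂p) + 4 / 3 := by
          gcongr
          rw [show (4 : ENNReal) / 3 = 4 * (1 / 3) by
            rw [← mul_div_assoc]; norm_num]
          gcongr
  have h3 : (8 : ENNReal) / 3 = 4 / 3 + 4 / 3 := by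
    rw [← ENNReal.add_div]; norm_num
  rw [h3] at h2
  exact (ENNReal.add_le_add_iff_right ((ENNReal.div_lt_top (by norm_num) (by norm_num)).ne)).mp h2
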